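/- Let n ≥ 2, a > 0, c > 0, and α = (α_1,…,α_n) ∈ (0,∞)^n with a α_k < 1 for all k. Let μ ∈ ℝ^n and let Σ ∈ ℝ^{n×n} be a symmetric positive semidefinite matrix. For parameters (a', α', μ', Σ') satisfying a' α'_k < 1, write Ψ_{a',α',μ',Σ'}(θ) := −a' Log(1 − i⟨α'⋄μ', θ⟩ + ½‖θ‖²_{α'⋄Σ'}) − Σ_{k=1}^n β'_k Log(1 − i α'_k μ'_k θ_k + ½ α'_k θ_k² Σ'_{kk}) with β'_k := (1 − a'α'_k)/α'_k. Then for all θ ∈ ℝ^n, c · Ψ_{a,α,μ,Σ}(θ) = Ψ_{ca, α/c, cμ, cΣ}(θ). (Note (ca)(α_k/c) = a α_k < 1, so the right-hand side is well defined.) -/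

import Mathlib

open MeasureTheory Complex

noncomputable section

/-- Euclidean inner product on `ℝ^n`. -/
def dot {n : ℕ} (x y : Fin n → ℝ) : ℝ := ∑ k, x k * y k

/-- Quadratic form `‖θ‖²_A = θ A θᵀ`. -/
def quad {n : ℕ} (A : Matrix (Fin n) (Fin n) ℝ) (θ : Fin n → ℝ) : ℝ :=
  ∑ k, ∑ l, θ k * A k l * θ l

/-- Outer product `t ⋄ μ` of vectors, `(t ⋄ μ)_k = t_k μ_k`. -/
def diaV {n : ℕ} (t μ : Fin n → ℝ) : Fin n → ℝ := fun k => t k * μ k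

/-- Outer product `t ⋄ Σ`, `(t ⋄ Σ)_{kl} = Σ_{kl} min(t_k, t_l)`. -/
def diaM {n : ℕ} (t : Fin n → ℝ) (A : Matrix (Fin n) (Fin n) ℝ) :
    Matrix (Fin n) (Fin n) ℝ := Matrix.of fun k l => A k l * min (t k) (t l)

/-- Lévy exponent of the weak variance-alpha-gamma process `WVAG^n(a, α, μ, Σ)`:
`Ψ(θ) = -a Log(1 - i⟨α⋄μ,θ⟩ + ½‖θ‖²_{α⋄Σ}) - ∑ₖ βₖ Log(1 - i αₖ μₖ θₖ + ½ αₖ θₖ² Σₖₖ)`,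
where `βₖ = (1 - a αₖ)/αₖ`. -/
def Ψwvag {n : ℕ} (a : ℝ) (α μ : Fin n → ℝ) (S : Matrix (Fin n) (Fin n) ℝ)
    (θ : Fin n → ℝ) : ℂ :=
  -(a : ℂ) * Complex.log (1 - Complex.I * (dot (diaV α μ) θ : ℂ) +
      (quad (diaM α S) θ : ℂ) / 2) -
    ∑ k, (((1 - a * α k) / α k : ℝ) : ℂ) *
      Complex.log (1 - Complex.I * ((α k * μ k * θ k : ℝ) : ℂ) +
        ((α k * θ k ^ 2 * S k k : ℝ) : ℂ) / 2)

/-- Time-scaling property of the `WVAG` Lévy exponent: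
`c Ψ_{a,α,μ,Σ}(θ) = Ψ_{ca, α/c, cμ, cΣ}(θ)`, i.e. `(X(ct))_t ~ WVAG^n(ca, α/c, cμ, cΣ)`. -/
theorem stmt7 {n : ℕ} (hn : 2 ≤ n) (a c : ℝ) (ha : 0 < a) (hc : 0 < c)
    (α : Fin n → ℝ) (hα : ∀ k, 0 < α k) (hsmall : ∀ k, a * α k < 1)
    (μ : Fin n → ℝ) (S : Matrix (Fin n) (Fin n) ℝ) (hS : S.PosSemidef)
    (θ : Fin n → ℝ) :
    (c : ℂ) * Ψwvag a α μ S θ =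
      Ψwvag (c * a) (fun k => α k / c) (c • μ) (c • S) θ := by

  have hc' : c ≠ 0 := hc.ne'
  have hdot : dot (diaV (fun k => α k / c) (c • μ)) θ = dot (diaV α μ) θ := by
    unfold dot diaV
    refine Finset.sum_congr rfl fun k _ => ?_
    simp only [Pi.smul_apply, smul_eq_mul]
    field_simp
  have hquad : quad (diaM (fun k => α k / c) (c • S)) θ = quad (diaM α S) θ := by
    unfold quad diaM
    refine Finset.sum_congr rfl fun k _ => Finset.sum_congr rfl fun l _ => ?_
    simp only [Matrix.of_apply, Matrix.smul_apply, smul_eq_mul]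
    rw [show α k / c ⊓ α l / c = (α k ⊓ α l) / c from (min_div_div_right hc.le _ _)]
    field_simp
  unfold Ψwvag
  rw [hdot, hquad, mul_sub, Finset.mul_sum]
  congr 1
  · push_cast; ring
  · refine Finset.sum_congr rfl fun k _ => ?_
    have h1 : α k / c * (c • μ) k * θ k = α k * μ k * θ k := by
      simp only [Pi.smul_apply, smul_eq_mul]; field_simp
    have h2 : α k / c * θ k ^ 2 * (c • S) k k = α k * θ k ^ 2 * S k k := by
      simp only [Matrix.smul_apply, smul_eq_mul]; field_simp
    rw [h1, h2]
    have h3 : ((1 - c * a * (α k / c)) / (α k / c) : ℝ) = c * ((1 - a * α k) / α k) := by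
      field_simp
    rw [h3]
    push_cast; ring
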